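/- arXiv:2007.07605 — 4 statements merged into one kernel-verified Lean document; each statement's English description precedes it below -/
import Mathlib

section
/- Let $X$ be a random variable with values in $\mathbb{N}_0$ and let $X_0, X_1, X_2, \ldots$ be independent random variables each having the same distribution as $X$. Set $M := \sup\{-j + X_j : j \in \mathbb{N}_0\}$. Then $\mathbb{E}(M) = \infty$ if and only if $\mathbb{E}(X^2) = \infty$. -/
open MeasureTheory ProbabilityTheory
open scoped ENNReal
open Finset

set_option maxHeartbeats 1000000

lemma prod_mul_one_add_sum_le (p : ℕ → ℝ) (h0 : ∀ j, 0 ≤ p j) (h1 : ∀ j, p j ≤ 1) (n : ℕ) :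
    (∏ j ∈ range n, (1 - p j)) * (1 + ∑ j ∈ range n, p j) ≤ 1 := by
  induction n with
  | zero => simp
  | succ n ih =>
    rw [prod_range_succ, sum_range_succ]
    have hprod : 0 ≤ ∏ j ∈ range n, (1 - p j) :=
      Finset.prod_nonneg fun j _ => by linarith [h1 j]
    have hsum : 0 ≤ ∑ j ∈ range n, p j := Finset.sum_nonneg fun j _ => h0 j
    have key : (1 - p n) * (1 + (∑ j ∈ range n, p j + p n)) ≤ 1 + ∑ j ∈ range n, p j := by
      nlinarith [h0 n, h1 n]
    calc (∏ j ∈ range n, (1 - p j)) * (1 - p n) * (1 + (∑ j ∈ range n, p j + p n))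
        = (∏ j ∈ range n, (1 - p j)) * ((1 - p n) * (1 + (∑ j ∈ range n, p j + p n))) := by ring
      _ ≤ (∏ j ∈ range n, (1 - p j)) * (1 + ∑ j ∈ range n, p j) :=
          mul_le_mul_of_nonneg_left key hprod
      _ ≤ 1 := ih

lemma tsum_ind_sandwich (x : ℝ≥0∞) :
    (∑' m : ℕ, if (m : ℝ≥0∞) + 1 ≤ x then (1:ℝ≥0∞) else 0) ≤ x ∧
      x ≤ (∑' m : ℕ, if (m : ℝ≥0∞) + 1 ≤ x then (1:ℝ≥0∞) else 0) + 1 := by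
  rcases eq_or_ne x ⊤ with rfl | hx
  · have h1 : (∑' m : ℕ, if (m : ℝ≥0∞) + 1 ≤ ⊤ then (1:ℝ≥0∞) else 0)
        = ∑' _ : ℕ, (1:ℝ≥0∞) := by
      refine tsum_congr fun m => ?_
      simp
    have h2 : (∑' _ : ℕ, (1:ℝ≥0∞)) = ⊤ := ENNReal.tsum_const_eq_top_of_ne_zero one_ne_zero
    constructor
    · exact le_top
    · rw [h1, h2]; simp
  · set K : ℕ := Nat.floor x.toReal with hK
    have hxr : 0 ≤ x.toReal := ENNReal.toReal_nonneg
    have hcond : ∀ m : ℕ, ((m : ℝ≥0∞) + 1 ≤ x) ↔ m < K := by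
      intro m
      have e1 : ((m : ℝ≥0∞) + 1) = ENNReal.ofReal ((m : ℝ) + 1) := by
        rw [ENNReal.ofReal_add (by positivity) zero_le_one]
        simp [ENNReal.ofReal_natCast]
      rw [e1, ENNReal.ofReal_le_iff_le_toReal hx, hK]
      rw [show ((m:ℝ) + 1) = ((m + 1 : ℕ) : ℝ) by push_cast; ring]
      rw [← Nat.le_floor_iff hxr]
      omega
    have hsum : (∑' m : ℕ, if (m : ℝ≥0∞) + 1 ≤ x then (1:ℝ≥0∞) else 0) = K := by
      have : ∀ m : ℕ, m ∉ range K → (if (m : ℝ≥0∞) + 1 ≤ x then (1:ℝ≥0∞) else 0) = 0 := by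
        intro m hm
        rw [if_neg]
        rw [hcond m]
        simpa using hm
      rw [tsum_eq_sum this]
      have : ∀ m ∈ range K, (if (m : ℝ≥0∞) + 1 ≤ x then (1:ℝ≥0∞) else 0) = 1 := by
        intro m hm
        rw [if_pos]
        rw [hcond m]
        simpa using hm
      rw [Finset.sum_congr rfl this]
      simp
    rw [hsum]
    constructor
    · have : (K : ℝ) ≤ x.toReal := Nat.floor_le hxr
      calc (K : ℝ≥0∞) = ENNReal.ofReal (K : ℝ) := by simp [ENNReal.ofReal_natCast]
        _ ≤ ENNReal.ofReal x.toReal := ENNReal.ofReal_le_ofReal this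
        _ = x := ENNReal.ofReal_toReal hx
    · have : x.toReal < (K : ℝ) + 1 := Nat.lt_floor_add_one _
      calc x = ENNReal.ofReal x.toReal := (ENNReal.ofReal_toReal hx).symm
        _ ≤ ENNReal.ofReal ((K : ℝ) + 1) := ENNReal.ofReal_le_ofReal this.le
        _ = (K : ℝ≥0∞) + 1 := by
            rw [ENNReal.ofReal_add (by positivity) zero_le_one]
            simp [ENNReal.ofReal_natCast]

lemma sup_cast_iff (t : ℕ → ℕ) (m : ℕ) :
    ((m:ℝ≥0∞) + 1 ≤ ⨆ j, ((t j : ℕ) : ℝ≥0∞)) ↔ ∃ j, m + 1 ≤ t j := by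
  constructor
  · intro h
    by_contra hc
    push_neg at hc
    have hle : (⨆ j, ((t j : ℕ) : ℝ≥0∞)) ≤ (m : ℝ≥0∞) :=
      iSup_le fun j => Nat.cast_le.mpr (by have := hc j; omega : t j ≤ m)
    have h2 : (m:ℝ≥0∞) + 1 ≤ (m:ℝ≥0∞) := le_trans h hle
    have h3 : (m + 1 : ℕ) ≤ (m : ℕ) := by exact_mod_cast h2
    omega
  · rintro ⟨j, hj⟩
    refine le_trans ?_ (le_iSup (fun j => ((t j : ℕ) : ℝ≥0∞)) j)
    have : ((m+1 : ℕ) : ℝ≥0∞) ≤ ((t j : ℕ) : ℝ≥0∞) := Nat.cast_le.mpr hj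
    exact_mod_cast this


lemma lintegral_top_iff_tsum_top {Ω : Type*} [MeasurableSpace Ω] (P : Measure Ω)
    [IsProbabilityMeasure P] (f : Ω → ℝ≥0∞) (hf : Measurable f) :
    (∫⁻ ω, f ω ∂P = ∞) ↔ (∑' m : ℕ, P {ω | (m : ℝ≥0∞) + 1 ≤ f ω}) = ∞ := by
  have hms : ∀ m : ℕ, MeasurableSet {ω | (m : ℝ≥0∞) + 1 ≤ f ω} := fun m =>
    measurableSet_le measurable_const hf
  set g : Ω → ℝ≥0∞ :=
    fun ω => ∑' m : ℕ, Set.indicator {ω | (m : ℝ≥0∞) + 1 ≤ f ω} (fun _ => (1:ℝ≥0∞)) ω with hg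
  have hgf : ∀ ω, g ω ≤ f ω ∧ f ω ≤ g ω + 1 := by
    intro ω
    have := tsum_ind_sandwich (f ω)
    have he : g ω = ∑' m : ℕ, if (m : ℝ≥0∞) + 1 ≤ f ω then (1:ℝ≥0∞) else 0 := by
      rw [hg]
      exact tsum_congr fun m => by rw [Set.indicator_apply]; rfl
    rw [he]
    exact this
  have hgint : ∫⁻ ω, g ω ∂P = ∑' m : ℕ, P {ω | (m : ℝ≥0∞) + 1 ≤ f ω} := by
    rw [hg, lintegral_tsum fun m => ((measurable_const.indicator (hms m)).aemeasurable)]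
    exact tsum_congr fun m => by
      exact lintegral_indicator_one (hms m)
  constructor
  · intro h
    have h2 : ∫⁻ ω, f ω ∂P ≤ (∑' m : ℕ, P {ω | (m : ℝ≥0∞) + 1 ≤ f ω}) + 1 := by
      calc ∫⁻ ω, f ω ∂P ≤ ∫⁻ ω, g ω + 1 ∂P := lintegral_mono fun ω => (hgf ω).2
        _ = ∫⁻ ω, g ω ∂P + 1 := by rw [lintegral_add_right _ measurable_const]; simp
        _ = _ := by rw [hgint]
    rw [h] at h2
    by_contra hne
    exact (ENNReal.add_lt_top.mpr ⟨Ne.lt_top hne, ENNReal.one_lt_top⟩).ne (top_le_iff.mp h2)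
  · intro h
    have : (∑' m : ℕ, P {ω | (m : ℝ≥0∞) + 1 ≤ f ω}) ≤ ∫⁻ ω, f ω ∂P := by
      rw [← hgint]; exact lintegral_mono fun ω => (hgf ω).1
    rw [h] at this
    exact top_le_iff.mp this

lemma union_lower_bound {Ω : Type*} [MeasurableSpace Ω] (P : Measure Ω) [IsProbabilityMeasure P]
    (X : Ω → ℕ) (Xs : ℕ → Ω → ℕ) (hXs : ∀ j, Measurable (Xs j))
    (hindep : iIndepFun Xs P)
    (hident : ∀ j, IdentDistrib (Xs j) X P P) (m : ℕ) :
    min (∑' j : ℕ, P {ω | j + m ≤ X ω}) 1 / 2 ≤ P (⋃ j : ℕ, {ω | j + m ≤ Xs j ω}) := by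
  classical
  set U : ℝ≥0∞ := P (⋃ j : ℕ, {ω | j + m ≤ Xs j ω}) with hU
  set a : ℕ → ℝ≥0∞ := fun k => P {ω | k ≤ X ω} with ha
  have ha1 : ∀ k, a k ≤ 1 := fun k => prob_le_one
  have hatop : ∀ k, a k ≠ ⊤ := fun k => (lt_of_le_of_lt (ha1 k) ENNReal.one_lt_top).ne
  have hAmeas : ∀ j : ℕ, MeasurableSet {ω | j + m ≤ Xs j ω} := fun j =>
    (hXs j) (trivial : MeasurableSet {t : ℕ | j + m ≤ t})
  have haA : ∀ j : ℕ, P {ω | j + m ≤ Xs j ω} = a (j + m) := fun j =>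
    (hident j).measure_mem_eq (s := {t : ℕ | j + m ≤ t}) trivial
  have hcompl : ∀ j : ℕ, P {ω | Xs j ω < j + m} = 1 - a (j + m) := by
    intro j
    have : {ω | Xs j ω < j + m} = {ω | j + m ≤ Xs j ω}ᶜ := by
      ext ω; simp [Set.mem_compl_iff, not_le]
    rw [this, prob_compl_eq_one_sub (hAmeas j), haA j]
  -- finite product bound
  have hstep : ∀ n : ℕ, 1 - ∏ j ∈ range n, (1 - a (j + m)) ≤ U := by
    intro n
    have hprod : P (⋂ j ∈ range n, Xs j ⁻¹' {t : ℕ | t < j + m})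
        = ∏ j ∈ range n, P (Xs j ⁻¹' {t : ℕ | t < j + m}) :=
      (ProbabilityTheory.iIndepFun_iff_measure_inter_preimage_eq_mul.mp hindep) (range n)
        (fun j _ => trivial)
    have hpre : ∀ j : ℕ, Xs j ⁻¹' {t : ℕ | t < j + m} = {ω | Xs j ω < j + m} := fun j => rfl
    have hsub : (⋃ j : ℕ, {ω | j + m ≤ Xs j ω})ᶜ ⊆ ⋂ j ∈ range n, Xs j ⁻¹' {t : ℕ | t < j + m} := by
      rw [Set.compl_iUnion]
      intro ω hω
      simp only [Set.mem_iInter] at *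
      intro j _
      have := hω j
      simp only [Set.mem_compl_iff, Set.mem_setOf_eq, not_le] at this
      exact this
    have h1 : 1 - U ≤ ∏ j ∈ range n, (1 - a (j + m)) := by
      have := measure_mono (μ := P) hsub
      rw [prob_compl_eq_one_sub (MeasurableSet.iUnion hAmeas), hprod] at this
      calc 1 - U ≤ ∏ j ∈ range n, P (Xs j ⁻¹' {t : ℕ | t < j + m}) := this
        _ = ∏ j ∈ range n, (1 - a (j + m)) := by
            exact Finset.prod_congr rfl fun j _ => by rw [hpre j, hcompl j]
    rw [tsub_le_iff_right]
    calc (1:ℝ≥0∞) = (1 - U) + U := (tsub_add_cancel_of_le prob_le_one).symm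
      _ ≤ (∏ j ∈ range n, (1 - a (j + m))) + U := add_le_add_left h1 U
      _ = U + ∏ j ∈ range n, (1 - a (j + m)) := add_comm _ _
  -- real conversion
  have hreal : ∀ n : ℕ,
      min (∑ j ∈ range n, a (j + m)) 1 / 2 ≤ U := by
    intro n
    set q : ℕ → ℝ := fun j => (a (j + m)).toReal with hq
    have hq0 : ∀ j, 0 ≤ q j := fun j => ENNReal.toReal_nonneg
    have hq1 : ∀ j, q j ≤ 1 := fun j => by
      rw [hq]
      exact ENNReal.toReal_le_of_le_ofReal zero_le_one (by simpa using ha1 (j + m))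
    set σ : ℝ := ∑ j ∈ range n, q j with hσ
    have hσ0 : 0 ≤ σ := Finset.sum_nonneg fun j _ => hq0 j
    have hofa : ∀ j, a (j + m) = ENNReal.ofReal (q j) := fun j =>
      (ENNReal.ofReal_toReal (hatop (j + m))).symm
    have hfac : ∀ j, (1 : ℝ≥0∞) - a (j + m) = ENNReal.ofReal (1 - q j) := by
      intro j
      rw [ENNReal.ofReal_sub _ (hq0 j), ENNReal.ofReal_one, hofa j]
    have hprodR : ∏ j ∈ range n, ((1:ℝ≥0∞) - a (j + m))
        = ENNReal.ofReal (∏ j ∈ range n, (1 - q j)) := by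
      rw [Finset.prod_congr rfl fun j _ => hfac j]
      rw [← ENNReal.ofReal_prod_of_nonneg fun j _ => by linarith [hq1 j]]
    have hPle : (∏ j ∈ range n, (1 - q j)) ≤ 1 / (1 + σ) := by
      rw [le_div_iff₀ (by linarith : (0:ℝ) < 1 + σ)]
      exact prod_mul_one_add_sum_le q hq0 hq1 n
    have key : ENNReal.ofReal (σ / (1 + σ)) ≤ U := by
      refine le_trans ?_ (hstep n)
      have hsplit : ENNReal.ofReal (σ / (1 + σ)) + ENNReal.ofReal (1 / (1 + σ)) = 1 := by
        rw [← ENNReal.ofReal_add (by positivity) (by positivity)]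
        rw [← add_div, add_comm σ 1, div_self (by linarith : (1:ℝ) + σ ≠ 0), ENNReal.ofReal_one]
      have : ENNReal.ofReal (σ / (1 + σ)) = 1 - ENNReal.ofReal (1 / (1 + σ)) := by
        rw [← hsplit]
        simp [ENNReal.add_sub_cancel_right, ENNReal.ofReal_ne_top]
      rw [this]
      refine tsub_le_tsub_left ?_ 1
      rw [hprodR]
      exact ENNReal.ofReal_le_ofReal hPle
    refine le_trans ?_ key
    have hτ : (∑ j ∈ range n, a (j + m)) = ENNReal.ofReal σ := by
      rw [hσ, ENNReal.ofReal_sum_of_nonneg fun j _ => hq0 j]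
      exact Finset.sum_congr rfl fun j _ => hofa j
    rw [hτ]
    have hmin : min (ENNReal.ofReal σ) 1 = ENNReal.ofReal (min σ 1) := by
      rcases le_total σ 1 with h | h
      · rw [min_eq_left h, min_eq_left (by exact_mod_cast ENNReal.ofReal_le_one.mpr h)]
      · rw [min_eq_right h, min_eq_right (by rw [← ENNReal.ofReal_one]; exact ENNReal.ofReal_le_ofReal h)]
        exact ENNReal.ofReal_one.symm
    rw [hmin]
    have hdiv : ENNReal.ofReal (min σ 1) / 2 = ENNReal.ofReal (min σ 1 / 2) := by
      rw [ENNReal.ofReal_div_of_pos (by norm_num)]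
      norm_num
    rw [hdiv]
    refine ENNReal.ofReal_le_ofReal ?_
    rcases le_total σ 1 with h | h
    · rw [min_eq_left h]
      rw [div_le_div_iff₀ (by norm_num) (by linarith)]
      nlinarith
    · rw [min_eq_right h]
      rw [div_le_div_iff₀ (by norm_num) (by linarith)]
      nlinarith
  -- take supremum
  have htsum : (∑' j : ℕ, P {ω | j + m ≤ X ω}) = ⨆ n, ∑ j ∈ range n, a (j + m) := by
    rw [show (fun j : ℕ => P {ω | j + m ≤ X ω}) = fun j => a (j + m) from rfl]
    exact ENNReal.tsum_eq_iSup_nat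
  rw [htsum]
  have heq : ((⨆ n, ∑ j ∈ range n, a (j + m)) ⊓ 1) / 2
      = ⨆ n, (((∑ j ∈ range n, a (j + m)) ⊓ 1) / 2) := by
    rw [iSup_inf_eq, ENNReal.iSup_div]
  show ((⨆ n, ∑ j ∈ range n, a (j + m)) ⊓ 1) / 2 ≤ U
  rw [heq]
  exact iSup_le fun n => hreal n


lemma ennreal_split_sum (g : ℕ → ℝ≥0∞) (K : ℕ) :
    ∑' k : ℕ, g k = (∑ k ∈ range K, g k) + ∑' j : ℕ, g (j + K) := by
  induction K with
  | zero => simp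
  | succ K ih =>
    rw [ih, sum_range_succ]
    have : ∑' j : ℕ, g (j + K) = g K + ∑' j : ℕ, g (j + (K + 1)) := by
      have := tsum_eq_zero_add' (f := fun j => g (j + K)) ENNReal.summable
      simpa [add_assoc, add_comm, add_left_comm] using this
    rw [this, add_assoc]

lemma tail_sum_eq (a : ℕ → ℝ≥0∞) :
    ∑' m : ℕ, (∑' j : ℕ, a (j + (m + 1))) = ∑' k : ℕ, k * a k := by
  have h1 : ∀ m : ℕ, (∑' j : ℕ, a (j + (m + 1)))
      = ∑' k : ℕ, (if m < k then a k else 0) := by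
    intro m
    rw [ennreal_split_sum (fun k => if m < k then a k else 0) (m+1)]
    have hz : (∑ k ∈ range (m+1), if m < k then a k else 0) = 0 := by
      refine Finset.sum_eq_zero fun k hk => ?_
      rw [if_neg]
      simp only [mem_range] at hk
      omega
    rw [hz, zero_add]
    refine tsum_congr fun j => ?_
    rw [if_pos (by omega)]
  calc ∑' m : ℕ, (∑' j : ℕ, a (j + (m + 1)))
      = ∑' m : ℕ, ∑' k : ℕ, (if m < k then a k else 0) := tsum_congr h1
    _ = ∑' k : ℕ, ∑' m : ℕ, (if m < k then a k else 0) := ENNReal.tsum_comm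
    _ = ∑' k : ℕ, k * a k := by
        refine tsum_congr fun k => ?_
        have hz : ∀ m : ℕ, m ∉ range k → (if m < k then a k else 0) = 0 := by
          intro m hm; rw [if_neg]; simp only [mem_range] at hm; omega
        rw [tsum_eq_sum hz]
        have : ∀ m ∈ range k, (if m < k then a k else 0) = a k := by
          intro m hm; simp only [mem_range] at hm; rw [if_pos hm]
        rw [Finset.sum_congr rfl this, Finset.sum_const, card_range, nsmul_eq_mul]

lemma weight_iff (a p : ℕ → ℝ≥0∞) (hap : ∀ k : ℕ, a k = ∑' n : ℕ, (if k ≤ n then p n else 0)) :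
    (∑' k : ℕ, k * a k = ⊤) ↔ (∑' n : ℕ, (n : ℝ≥0∞) ^ 2 * p n = ⊤) := by
  have key : ∑' k : ℕ, (k : ℝ≥0∞) * a k
      = ∑' n : ℕ, ((∑ k ∈ range (n+1), (k : ℝ≥0∞)) * p n) := by
    calc ∑' k : ℕ, (k : ℝ≥0∞) * a k
        = ∑' k : ℕ, ∑' n : ℕ, (if k ≤ n then (k : ℝ≥0∞) * p n else 0) := by
          refine tsum_congr fun k => ?_
          rw [hap k, ← ENNReal.tsum_mul_left]
          exact tsum_congr fun n => by rw [mul_ite, mul_zero]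
      _ = ∑' n : ℕ, ∑' k : ℕ, (if k ≤ n then (k : ℝ≥0∞) * p n else 0) := ENNReal.tsum_comm
      _ = ∑' n : ℕ, ((∑ k ∈ range (n+1), (k : ℝ≥0∞)) * p n) := by
          refine tsum_congr fun n => ?_
          have hz : ∀ k : ℕ, k ∉ range (n+1) → (if k ≤ n then (k : ℝ≥0∞) * p n else 0) = 0 := by
            intro k hk; rw [if_neg]; simp only [mem_range] at hk; omega
          rw [tsum_eq_sum hz, Finset.sum_mul]
          refine Finset.sum_congr rfl fun k hk => ?_
          simp only [mem_range] at hk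
          rw [if_pos (by omega)]
  have hCle : ∀ n : ℕ, (∑ k ∈ range (n+1), (k : ℝ≥0∞)) ≤ (n : ℝ≥0∞) ^ 2 := by
    intro n
    have : (∑ k ∈ range (n+1), (k : ℝ≥0∞)) = ((∑ k ∈ range (n+1), k : ℕ) : ℝ≥0∞) := by
      push_cast; rfl
    rw [this]
    have hn : (∑ k ∈ range (n+1), k) ≤ n ^ 2 := by
      have h2 : (∑ k ∈ range (n+1), k) * 2 = (n+1) * n := Finset.sum_range_id_mul_two (n+1)
      nlinarith [Nat.le_self_pow (two_ne_zero) n]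
    calc ((∑ k ∈ range (n+1), k : ℕ) : ℝ≥0∞) ≤ ((n ^ 2 : ℕ) : ℝ≥0∞) := Nat.cast_le.mpr hn
      _ = (n : ℝ≥0∞) ^ 2 := by push_cast; rfl
  have hleC : ∀ n : ℕ, (n : ℝ≥0∞) ^ 2 ≤ 2 * (∑ k ∈ range (n+1), (k : ℝ≥0∞)) := by
    intro n
    have : (∑ k ∈ range (n+1), (k : ℝ≥0∞)) = ((∑ k ∈ range (n+1), k : ℕ) : ℝ≥0∞) := by
      push_cast; rfl
    rw [this]
    have hn : n ^ 2 ≤ 2 * (∑ k ∈ range (n+1), k) := by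
      have h2 : (∑ k ∈ range (n+1), k) * 2 = (n+1) * n := Finset.sum_range_id_mul_two (n+1)
      nlinarith
    calc (n : ℝ≥0∞) ^ 2 = ((n ^ 2 : ℕ) : ℝ≥0∞) := by push_cast; rfl
      _ ≤ ((2 * ∑ k ∈ range (n+1), k : ℕ) : ℝ≥0∞) := Nat.cast_le.mpr hn
      _ = 2 * ((∑ k ∈ range (n+1), k : ℕ) : ℝ≥0∞) := by push_cast; rfl
  rw [key]
  constructor
  · intro h
    have hle : ∑' n : ℕ, ((∑ k ∈ range (n+1), (k : ℝ≥0∞)) * p n)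
        ≤ ∑' n : ℕ, (n : ℝ≥0∞) ^ 2 * p n :=
      ENNReal.tsum_le_tsum fun n => mul_le_mul_left (hCle n) _
    exact top_le_iff.mp (h ▸ hle)
  · intro h
    have hle : ∑' n : ℕ, (n : ℝ≥0∞) ^ 2 * p n
        ≤ 2 * ∑' n : ℕ, ((∑ k ∈ range (n+1), (k : ℝ≥0∞)) * p n) := by
      rw [← ENNReal.tsum_mul_left]
      exact ENNReal.tsum_le_tsum fun n => by
        rw [← mul_assoc]
        exact mul_le_mul_left (hleC n) _
    rw [h] at hle
    have := top_le_iff.mp hle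
    rcases ENNReal.mul_eq_top.mp this with ⟨_, h2⟩ | ⟨h2, _⟩
    · exact h2
    · norm_num at h2

/-- For an `ℕ₀`-valued random variable `X` and independent copies
`X₀, X₁, X₂, …` of `X`, with `M := sup {-j + X_j : j ∈ ℕ₀}` (pointwise, in the
extended sense; note `M ≥ X₀ ≥ 0`), we have `𝔼(M) = ∞ ↔ 𝔼(X²) = ∞`. -/
theorem discrete_pinning_sup_iff_second_moment
    {Ω : Type*} [MeasurableSpace Ω] (P : Measure Ω) [IsProbabilityMeasure P]
    (X : Ω → ℕ) (hX : Measurable X)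
    (Xs : ℕ → Ω → ℕ) (hXs : ∀ j, Measurable (Xs j))
    (hindep : iIndepFun Xs P)
    (hident : ∀ j, IdentDistrib (Xs j) X P P)
    (M : Ω → ℝ≥0∞)
    (hM : ∀ ω, M ω = ⨆ j : ℕ, ((Xs j ω : ℝ≥0∞) - (j : ℝ≥0∞))) :
    (∫⁻ ω, M ω ∂P = ∞) ↔ (∫⁻ ω, ((X ω : ℝ≥0∞)) ^ 2 ∂P = ∞) := by
  classical
  set a : ℕ → ℝ≥0∞ := fun k => P {ω | k ≤ X ω} with ha
  set S : ℕ → ℝ≥0∞ := fun m => ∑' j : ℕ, a (j + m) with hS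
  set b : ℕ → ℝ≥0∞ := fun m => P (⋃ j : ℕ, {ω | j + m ≤ Xs j ω}) with hb
  set p : ℕ → ℝ≥0∞ := fun n => P (X ⁻¹' {n}) with hp
  have ha1 : ∀ k, a k ≤ 1 := fun k => prob_le_one
  have hatop : ∀ k, a k ≠ ⊤ := fun k => (lt_of_le_of_lt (ha1 k) ENNReal.one_lt_top).ne
  have hAmeas : ∀ m j : ℕ, MeasurableSet {ω | j + m ≤ Xs j ω} := fun m j =>
    (hXs j) (trivial : MeasurableSet {t : ℕ | j + m ≤ t})
  have haA : ∀ m j : ℕ, P {ω | j + m ≤ Xs j ω} = a (j + m) := fun m j =>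
    (hident j).measure_mem_eq (s := {t : ℕ | j + m ≤ t}) trivial
  -- measurability of M
  have hMeq : M = fun ω => ⨆ j : ℕ, ((Xs j ω : ℝ≥0∞) - (j : ℝ≥0∞)) := funext hM
  have hMeasM : Measurable M := by
    rw [hMeq]
    exact Measurable.iSup fun j =>
      Measurable.sub (f := fun ω => ((Xs j ω : ℕ) : ℝ≥0∞)) (g := fun _ => (j : ℝ≥0∞))
        (measurable_from_top.comp (hXs j)) measurable_const
  -- layer sets
  have hSet : ∀ m : ℕ, {ω | (m : ℝ≥0∞) + 1 ≤ M ω} = ⋃ j : ℕ, {ω | j + (m + 1) ≤ Xs j ω} := by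
    intro m
    ext ω
    simp only [Set.mem_setOf_eq, Set.mem_iUnion]
    rw [hM ω]
    have hterm : (fun j : ℕ => ((Xs j ω : ℝ≥0∞) - (j : ℝ≥0∞)))
        = fun j : ℕ => (((Xs j ω - j : ℕ) : ℝ≥0∞)) := by
      funext j
      exact (ENNReal.natCast_sub _ _).symm
    rw [hterm, sup_cast_iff]
    exact exists_congr fun j => by omega
  -- layer cake for M
  have hlayerM : (∫⁻ ω, M ω ∂P = ∞) ↔ (∑' m : ℕ, b (m + 1)) = ∞ := by
    rw [lintegral_top_iff_tsum_top P M hMeasM]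
    have : ∀ m : ℕ, P {ω | (m : ℝ≥0∞) + 1 ≤ M ω} = b (m + 1) := fun m => by
      rw [hSet m]
    rw [tsum_congr this]
  -- upper bound
  have hbleS : ∀ m : ℕ, b m ≤ S m := by
    intro m
    refine le_trans (measure_iUnion_le _) ?_
    exact le_of_eq (tsum_congr fun j => haA m j)
  -- lower bound
  have hblow : ∀ m : ℕ, min (S m) 1 / 2 ≤ b m := fun m =>
    union_lower_bound P X Xs hXs hindep hident m
  -- S m is finite when total is
  have hSfin : ∀ m : ℕ, (∑' k : ℕ, a k) ≠ ⊤ → S m ≠ ⊤ := by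
    intro m htot
    intro hcon
    apply htot
    rw [ennreal_split_sum a m]
    have h2 : (∑' j : ℕ, a (j + m)) = ⊤ := hcon
    rw [h2]
    exact add_top _
  -- equivalence of sums
  have hequiv : ((∑' m : ℕ, b (m + 1)) = ∞) ↔ ((∑' m : ℕ, S (m + 1)) = ∞) := by
    constructor
    · intro h
      exact top_le_iff.mp (h ▸ ENNReal.tsum_le_tsum fun m => hbleS (m + 1))
    · intro h
      have hmin : (∑' m : ℕ, min (S (m + 1)) 1) = ⊤ := by
        by_cases hca : (∑' k : ℕ, a k) = ⊤
        · have hStop : ∀ m : ℕ, S m = ⊤ := by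
            intro m
            by_contra hcon
            have hfin : (∑ k ∈ range m, a k) ≠ ⊤ := by
              refine (lt_of_le_of_lt (Finset.sum_le_card_nsmul _ _ 1 fun k _ => ha1 k) ?_).ne
              simp [lt_top_iff_ne_top]
            rw [ennreal_split_sum a m] at hca
            exact (ENNReal.add_ne_top.mpr ⟨hfin, hcon⟩) hca
          have : ∀ m : ℕ, min (S (m + 1)) 1 = 1 := fun m => by
            rw [hStop (m + 1)]; simp
          rw [tsum_congr this]
          exact ENNReal.tsum_const_eq_top_of_ne_zero one_ne_zero
        · -- tails tend to zero
          have htail : Filter.Tendsto S Filter.atTop (nhds 0) :=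
            ENNReal.tendsto_sum_nat_add a hca
          have hev : ∀ᶠ m in Filter.atTop, S m < 1 :=
            htail.eventually_lt_const (by norm_num)
          obtain ⟨m₀, hm₀⟩ := Filter.eventually_atTop.mp hev
          have hfinpart : (∑ m ∈ range m₀, S (m + 1)) ≠ ⊤ := by
            refine (lt_of_le_of_lt (Finset.sum_le_card_nsmul _ _ (∑' k : ℕ, a k)
              fun m _ => ?_) ?_).ne
            · rw [ennreal_split_sum a (m + 1)]
              exact le_add_self
            · exact lt_of_le_of_lt (nsmul_le_nsmul_right (le_refl _) _) (by
                have : (∑' k : ℕ, a k) < ⊤ := Ne.lt_top hca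
                exact lt_top_iff_ne_top.mpr (by
                  simp only [nsmul_eq_mul]
                  exact ENNReal.mul_ne_top (by simp) hca))
          have htailS : (∑' m : ℕ, S ((m + m₀) + 1)) = ⊤ := by
            rw [ennreal_split_sum (fun m => S (m + 1)) m₀] at h
            exact (ENNReal.add_eq_top.mp h).resolve_left hfinpart
          have hge : (∑' m : ℕ, min (S (m + 1)) 1) ≥ ∑' m : ℕ, min (S ((m + m₀) + 1)) 1 := by
            rw [ennreal_split_sum (fun m => min (S (m + 1)) 1) m₀]
            exact le_add_self
          have heqt : ∀ m : ℕ, min (S ((m + m₀) + 1)) 1 = S ((m + m₀) + 1) := by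
            intro m
            exact min_eq_left (hm₀ (m + m₀ + 1) (by omega)).le
          rw [tsum_congr heqt, htailS] at hge
          exact top_le_iff.mp hge
      have h2 : (∑' m : ℕ, min (S (m + 1)) 1) / 2 ≤ ∑' m : ℕ, b (m + 1) := by
        rw [div_eq_mul_inv, ← ENNReal.tsum_mul_right]
        exact ENNReal.tsum_le_tsum fun m => by
          rw [← div_eq_mul_inv]
          exact hblow (m + 1)
      rw [hmin] at h2
      have : (⊤ : ℝ≥0∞) / 2 = ⊤ := by
        simp [ENNReal.top_div]
      rw [this] at h2
      exact top_le_iff.mp h2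
  -- S sums to the weighted sum
  have hSsum : (∑' m : ℕ, S (m + 1)) = ∑' k : ℕ, k * a k := tail_sum_eq a
  -- a in terms of p
  have hap : ∀ k : ℕ, a k = ∑' n : ℕ, (if k ≤ n then p n else 0) := by
    intro k
    have h1 : a k = P (X ⁻¹' {n : ℕ | k ≤ n}) := rfl
    rw [h1, ← tsum_measure_preimage_singleton (Set.to_countable _)
      (fun y _ => hX (measurableSet_singleton y))]
    rw [tsum_subtype {n : ℕ | k ≤ n} (fun n => p n)]
    exact tsum_congr fun n => by
      rw [Set.indicator_apply]
      simp only [Set.mem_setOf_eq]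
  -- second moment formula
  have hX2 : (∫⁻ ω, ((X ω : ℝ≥0∞)) ^ 2 ∂P) = ∑' n : ℕ, (n : ℝ≥0∞) ^ 2 * p n := by
    have hmf : Measurable (fun n : ℕ => (n : ℝ≥0∞) ^ 2) := measurable_from_top
    have h := lintegral_map (μ := P) hmf hX
    rw [lintegral_countable' _] at h
    rw [← h]
    exact tsum_congr fun n => by
      rw [Measure.map_apply hX (measurableSet_singleton n)]
  rw [hlayerM, hequiv, hSsum, hX2]
  exact weight_iff a p hap
end

section
/- Let $X$ be a random variable with values in $\mathbb{N}_0$ satisfying $\mathbb{E}(X^2) < \infty$, and let $X_0, X_1, X_2, \ldots$ be independent random variables each having the same distribution as $X$. Then for $M := \sup\{-j + X_j : j \in \mathbb{N}_0\}$ one has $\mathbb{E}(M) < \infty$. -/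
open MeasureTheory ProbabilityTheory
open scoped ENNReal

lemma tsum_nat_sub_le_sq (n : ℕ) : ∑' j : ℕ, ((n : ℝ≥0∞) - j) ≤ (n : ℝ≥0∞) ^ 2 := by
  rw [tsum_eq_sum (s := Finset.range n) (fun j hj => by
    rw [Finset.mem_range, not_lt] at hj
    exact tsub_eq_zero_of_le (by exact_mod_cast hj))]
  calc ∑ j ∈ Finset.range n, ((n : ℝ≥0∞) - j)
      ≤ ∑ _j ∈ Finset.range n, (n : ℝ≥0∞) :=
        Finset.sum_le_sum fun j _ => tsub_le_self
    _ = (n : ℝ≥0∞) ^ 2 := by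
        rw [Finset.sum_const, Finset.card_range, nsmul_eq_mul, sq]

/-- For an `ℕ₀`-valued random variable `X` with `𝔼(X²) < ∞` and
independent copies `X₀, X₁, X₂, …` of `X`, the random variable
`M := sup {-j + X_j : j ∈ ℕ₀}` (pointwise, bounded below by `X₀ ≥ 0`)
satisfies `𝔼(M) < ∞`. -/
theorem sup_finite_expectation_of_second_moment_finite
    {Ω : Type*} [MeasurableSpace Ω] (P : Measure Ω) [IsProbabilityMeasure P]
    (X : Ω → ℕ) (hX : Measurable X)
    (hX2 : ∫⁻ ω, ((X ω : ℝ≥0∞)) ^ 2 ∂P < ∞)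
    (Xs : ℕ → Ω → ℕ) (hXs : ∀ j, Measurable (Xs j))
    (hindep : iIndepFun Xs P)
    (hident : ∀ j, IdentDistrib (Xs j) X P P)
    (M : Ω → ℝ≥0∞)
    (hM : ∀ ω, M ω = ⨆ j : ℕ, ((Xs j ω : ℝ≥0∞) - (j : ℝ≥0∞))) :
    ∫⁻ ω, M ω ∂P < ∞ := by
  have hmeas : ∀ j : ℕ, Measurable fun ω => ((Xs j ω : ℝ≥0∞) - (j : ℝ≥0∞)) :=
    fun j => (measurable_from_top (f := fun n : ℕ => ((n : ℝ≥0∞) - (j : ℝ≥0∞)))).comp (hXs j)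
  have hmeasX : ∀ j : ℕ, Measurable fun ω => ((X ω : ℝ≥0∞) - (j : ℝ≥0∞)) :=
    fun j => (measurable_from_top (f := fun n : ℕ => ((n : ℝ≥0∞) - (j : ℝ≥0∞)))).comp hX
  calc ∫⁻ ω, M ω ∂P
      ≤ ∫⁻ ω, ∑' j : ℕ, ((Xs j ω : ℝ≥0∞) - (j : ℝ≥0∞)) ∂P := by
        refine lintegral_mono fun ω => ?_
        rw [hM ω]
        exact iSup_le fun j => ENNReal.le_tsum j
    _ = ∑' j : ℕ, ∫⁻ ω, ((Xs j ω : ℝ≥0∞) - (j : ℝ≥0∞)) ∂P :=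
        lintegral_tsum fun j => (hmeas j).aemeasurable
    _ = ∑' j : ℕ, ∫⁻ ω, ((X ω : ℝ≥0∞) - (j : ℝ≥0∞)) ∂P := by
        refine tsum_congr fun j => ?_
        exact ((hident j).comp (measurable_from_top (f := fun n : ℕ =>
          ((n : ℝ≥0∞) - (j : ℝ≥0∞))))).lintegral_eq
    _ = ∫⁻ ω, ∑' j : ℕ, ((X ω : ℝ≥0∞) - (j : ℝ≥0∞)) ∂P :=
        (lintegral_tsum fun j => (hmeasX j).aemeasurable).symm
    _ ≤ ∫⁻ ω, ((X ω : ℝ≥0∞)) ^ 2 ∂P :=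
        lintegral_mono fun ω => tsum_nat_sub_le_sq (X ω)
    _ < ∞ := hX2
end

section
/- Let $X$ be a random variable with values in $\mathbb{N}_0$ and let $X_0, X_1, X_2, \ldots$ be independent random variables each having the same distribution as $X$. Set $M := \sup\{-j + X_j : j \in \mathbb{N}_0\}$ and $\alpha_k := \mathbb{P}(X \geq k)$ for $k \in \mathbb{N}$. Then for every $n \in \mathbb{N}$, $n \geq 1$, one has $\mathbb{P}(M \geq n) = 1 - \prod_{k=n}^{\infty} (1 - \alpha_k)$. -/
open MeasureTheory ProbabilityTheory Filter
open scoped ENNReal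

/-- For an `ℕ₀`-valued random variable `X`, independent copies
`X₀, X₁, X₂, …` of `X`, `M := sup {-j + X_j : j ∈ ℕ₀}` (pointwise) and
`α_k := P(X ≥ k)`, for every `n ≥ 1` one has
`P(M ≥ n) = 1 - ∏_{k=n}^∞ (1 - α_k)`, the infinite product being the limit
of the partial products. -/
theorem prob_sup_ge_eq_one_sub_prod
    {Ω : Type*} [MeasurableSpace Ω] (P : Measure Ω) [IsProbabilityMeasure P]
    (X : Ω → ℕ) (hX : Measurable X)
    (Xs : ℕ → Ω → ℕ) (hXs : ∀ j, Measurable (Xs j))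
    (hindep : iIndepFun Xs P)
    (hident : ∀ j, IdentDistrib (Xs j) X P P)
    (M : Ω → ℝ≥0∞)
    (hM : ∀ ω, M ω = ⨆ j : ℕ, ((Xs j ω : ℝ≥0∞) - (j : ℝ≥0∞)))
    (α : ℕ → ℝ) (hα : ∀ k, α k = (P {ω | k ≤ X ω}).toReal)
    (n : ℕ) (hn : 1 ≤ n) :
    Tendsto (fun N : ℕ => ∏ k ∈ Finset.Ico n N, (1 - α k)) atTop
      (nhds (1 - (P {ω | (n : ℝ≥0∞) ≤ M ω}).toReal)) := by
  -- the events
  set A : ℕ → Set Ω := fun j => Xs j ⁻¹' Set.Ici (n + j) with hAdef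
  set B : ℕ → Set Ω := fun j => (A j)ᶜ with hBdef
  have hAmeas : ∀ j, MeasurableSet (A j) := fun j => (hXs j) measurableSet_Ici
  have hBmeas : ∀ j, MeasurableSet (B j) := fun j => (hAmeas j).compl
  -- cast of truncated subtraction
  have hcast : ∀ a b : ℕ, ((a : ℝ≥0∞) - b) = ((a - b : ℕ) : ℝ≥0∞) := by
    intro a b
    exact (ENNReal.natCast_sub a b).symm
  -- the event {n ≤ M} is the union of the A j
  have hset : {ω | (n : ℝ≥0∞) ≤ M ω} = ⋃ j, A j := by
    ext ω
    simp only [Set.mem_setOf_eq, Set.mem_iUnion, hM, hAdef, Set.mem_preimage,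
      Set.mem_Ici]
    constructor
    · intro h
      have h1 : ((n - 1 : ℕ) : ℝ≥0∞) < ⨆ j, ((Xs j ω : ℝ≥0∞) - j) :=
        lt_of_lt_of_le (by exact_mod_cast Nat.sub_lt hn one_pos) h
      obtain ⟨j, hj⟩ := lt_iSup_iff.mp h1
      rw [hcast] at hj
      have hj' : (n - 1 : ℕ) < Xs j ω - j := by exact_mod_cast hj
      exact ⟨j, by omega⟩
    · rintro ⟨j, hj⟩
      refine le_trans ?_ (le_iSup (fun j => ((Xs j ω : ℝ≥0∞) - j)) j)
      rw [hcast]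
      exact_mod_cast (by omega : n ≤ Xs j ω - j)
  -- probability of B j
  have hPA : ∀ j, P (A j) = P {ω | n + j ≤ X ω} := by
    intro j
    have := (hident j).measure_mem_eq (measurableSet_Ici (a := n + j))
    simpa [hAdef, Set.preimage, Set.mem_Ici] using this
  have hPB : ∀ j, P (B j) = 1 - P {ω | n + j ≤ X ω} := by
    intro j
    rw [hBdef]
    rw [prob_compl_eq_one_sub (hAmeas j), hPA]
  -- finite intersections and independence
  have hprod : ∀ N : ℕ, P (⋂ j ∈ Finset.range N, B j)
      = ∏ j ∈ Finset.range N, (1 - P {ω | n + j ≤ X ω}) := by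
    intro N
    rw [hindep.meas_biInter (S := Finset.range N) (s := B)]
    · exact Finset.prod_congr rfl fun j _ => hPB j
    · intro j _
      exact ⟨(Set.Ici (n + j))ᶜ, (measurableSet_Ici).compl, rfl⟩
  -- continuity from above
  set s : ℕ → Set Ω := fun N => ⋂ j ∈ Finset.range N, B j with hsdef
  have hanti : Antitone s := by
    intro N N' h
    exact Set.biInter_subset_biInter_left (fun j hj => Finset.mem_range.mpr
      (lt_of_lt_of_le (Finset.mem_range.mp hj) h))
  have hsinter : (⋂ N, s N) = ⋂ j, B j := by
    ext ω
    simp only [hsdef, Set.mem_iInter, Finset.mem_range]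
    exact ⟨fun h j => h (j + 1) j (Nat.lt_succ_self j), fun h N j _ => h j⟩
  have htend : Tendsto (fun N => P (s N)) atTop (nhds (P (⋂ j, B j))) := by
    rw [← hsinter]
    exact tendsto_measure_iInter_atTop
      (fun N => ((Finset.measurableSet_biInter _ fun j _ => hBmeas j)).nullMeasurableSet)
      hanti ⟨0, measure_ne_top P _⟩
  -- identify the limit
  have hlim : P (⋂ j, B j) = 1 - P {ω | (n : ℝ≥0∞) ≤ M ω} := by
    rw [hset]
    have : (⋂ j, B j) = (⋃ j, A j)ᶜ := by
      simp [hBdef, Set.compl_iUnion]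
    rw [this, prob_compl_eq_one_sub (MeasurableSet.iUnion hAmeas)]
  -- ENNReal convergence
  have htend' : Tendsto (fun N => ∏ j ∈ Finset.range N, (1 - P {ω | n + j ≤ X ω}))
      atTop (nhds (1 - P {ω | (n : ℝ≥0∞) ≤ M ω})) := by
    rw [← hlim]
    exact htend.congr fun N => hprod N
  -- pass to the reals
  have hne : (1 : ℝ≥0∞) - P {ω | (n : ℝ≥0∞) ≤ M ω} ≠ ∞ :=
    (tsub_le_self.trans_lt (by norm_num : (1:ℝ≥0∞) < ∞)).ne
  have htendR := (ENNReal.tendsto_toReal hne).comp htend'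
  have hval : ((1 : ℝ≥0∞) - P {ω | (n : ℝ≥0∞) ≤ M ω}).toReal
      = 1 - (P {ω | (n : ℝ≥0∞) ≤ M ω}).toReal := by
    rw [ENNReal.toReal_sub_of_le prob_le_one ENNReal.one_ne_top, ENNReal.toReal_one]
  rw [hval] at htendR
  have hfun : ∀ N : ℕ, ((∏ j ∈ Finset.range N, (1 - P {ω | n + j ≤ X ω})).toReal)
      = ∏ k ∈ Finset.Ico n (n + N), (1 - α k) := by
    intro N
    rw [ENNReal.toReal_prod, Finset.prod_Ico_eq_prod_range]
    simp only [Nat.add_sub_cancel_left]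
    refine Finset.prod_congr rfl fun j _ => ?_
    rw [hα, ENNReal.toReal_sub_of_le prob_le_one ENNReal.one_ne_top, ENNReal.toReal_one]
  have htendR' : Tendsto (fun N : ℕ => ∏ k ∈ Finset.Ico n (n + N), (1 - α k)) atTop
      (nhds (1 - (P {ω | (n : ℝ≥0∞) ≤ M ω}).toReal)) :=
    htendR.congr fun N => hfun N
  rw [← tendsto_add_atTop_iff_nat (f := fun N : ℕ => ∏ k ∈ Finset.Ico n N, (1 - α k)) n]
  simpa [Nat.add_comm] using htendR'
end

section
/- Let $X$ be a random variable with values in $\mathbb{N}_0$ such that $\mathbb{E}(X) < \infty$, and let $X_0, X_1, X_2, \ldots$ be independent random variables each having the same distribution as $X$. Set $M := \sup\{-j + X_j : j \in \mathbb{N}_0\}$ and $\alpha_k := \mathbb{P}(X \geq k)$. If $n \in \mathbb{N}$ satisfies $\sum_{k=n}^{\infty} \alpha_k \leq \tfrac{1}{2}$, then $\mathbb{P}(M \geq n) \geq \tfrac{1}{2} \sum_{k=n}^{\infty} \alpha_k$. -/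
open MeasureTheory ProbabilityTheory
open scoped ENNReal

/-- Real-valued product bound: if `p j ∈ [0,1]` and the partial sum is `≤ 1`,
then `∏ (1 - p j) ≤ 1 - (∑ p j)/2`. -/
lemma real_prod_one_sub_le (p : ℕ → ℝ) (h0 : ∀ j, 0 ≤ p j) (h1 : ∀ j, p j ≤ 1) :
    ∀ m : ℕ, (∑ j ∈ Finset.range m, p j) ≤ 1 →
      ∏ j ∈ Finset.range m, (1 - p j) ≤ 1 - (∑ j ∈ Finset.range m, p j) / 2 := by
  intro m
  induction m with
  | zero => simp
  | succ m ih =>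
    intro hsum
    rw [Finset.sum_range_succ] at hsum ⊢
    rw [Finset.prod_range_succ]
    have hT : (∑ j ∈ Finset.range m, p j) ≤ 1 := by
      have := h0 m; linarith
    have hprod := ih hT
    have hprod0 : 0 ≤ ∏ j ∈ Finset.range m, (1 - p j) :=
      Finset.prod_nonneg fun j _ => by linarith [h1 j]
    have h1m : 0 ≤ 1 - p m := by linarith [h1 m]
    calc (∏ j ∈ Finset.range m, (1 - p j)) * (1 - p m)
        ≤ (1 - (∑ j ∈ Finset.range m, p j) / 2) * (1 - p m) :=
          mul_le_mul_of_nonneg_right hprod h1m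
      _ ≤ 1 - ((∑ j ∈ Finset.range m, p j) + p m) / 2 := by
          nlinarith [h0 m, hT]

/-- For an `ℕ₀`-valued random variable `X` with `𝔼(X) < ∞`,
independent copies `X₀, X₁, X₂, …` of `X`, `M := sup {-j + X_j : j ∈ ℕ₀}`
(pointwise) and `α_k := P(X ≥ k)`: if `n` satisfies `∑_{k=n}^∞ α_k ≤ 1/2`,
then `P(M ≥ n) ≥ (1/2) ∑_{k=n}^∞ α_k`. -/
theorem prob_sup_ge_ge_half_tail_sum
    {Ω : Type*} [MeasurableSpace Ω] (P : Measure Ω) [IsProbabilityMeasure P]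
    (X : Ω → ℕ) (hX : Measurable X)
    (hEX : ∫⁻ ω, (X ω : ℝ≥0∞) ∂P < ∞)
    (Xs : ℕ → Ω → ℕ) (hXs : ∀ j, Measurable (Xs j))
    (hindep : iIndepFun Xs P)
    (hident : ∀ j, IdentDistrib (Xs j) X P P)
    (M : Ω → ℝ≥0∞)
    (hM : ∀ ω, M ω = ⨆ j : ℕ, ((Xs j ω : ℝ≥0∞) - (j : ℝ≥0∞)))
    (α : ℕ → ℝ≥0∞) (hα : ∀ k, α k = P {ω | k ≤ X ω})
    (n : ℕ) (hn : 1 ≤ n)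
    (hsum : ∑' k : ℕ, α (n + k) ≤ 1 / 2) :
    P {ω | (n : ℝ≥0∞) ≤ M ω} ≥ (1 / 2) * ∑' k : ℕ, α (n + k) := by
  -- the events
  set A : ℕ → Set Ω := fun j => Xs j ⁻¹' Set.Ici (n + j) with hA
  have hAmeas : ∀ j, MeasurableSet (A j) := fun j =>
    (hXs j) measurableSet_Ici
  -- probabilities of the events
  have hPA : ∀ j, P (A j) = α (n + j) := by
    intro j
    rw [hα]
    have := (hident j).measure_mem_eq (s := Set.Ici (n + j)) measurableSet_Ici
    simpa [hA, Set.preimage, Set.Ici] using this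
  have hPA1 : ∀ j, P (A j) ≤ 1 := fun j => prob_le_one
  -- each α (n+j) ≤ tsum ≤ 1/2 ≤ 1
  have hα_le : ∀ m, ∑ j ∈ Finset.range m, α (n + j) ≤ 1 / 2 := by
    intro m
    exact le_trans (ENNReal.sum_le_tsum (Finset.range m)) hsum
  -- independence gives product formula for the complements
  have hprodeq : ∀ m : ℕ, P (⋂ j ∈ Finset.range m, (A j)ᶜ) =
      ∏ j ∈ Finset.range m, P ((A j)ᶜ) := by
    intro m
    refine hindep.meas_biInter (fun i _ => ?_)
    exact ⟨(Set.Ici (n + i))ᶜ, measurableSet_Ici.compl, rfl⟩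
  -- inclusion: A j ⊆ {M ≥ n}
  have hsub : ∀ j, A j ⊆ {ω | (n : ℝ≥0∞) ≤ M ω} := by
    intro j ω hω
    simp only [hA, Set.mem_preimage, Set.mem_Ici] at hω
    have h1 : (n : ℝ≥0∞) ≤ (Xs j ω : ℝ≥0∞) - (j : ℝ≥0∞) := by
      refine ENNReal.le_sub_of_add_le_right (ENNReal.natCast_ne_top j) ?_
      have : ((n + j : ℕ) : ℝ≥0∞) ≤ ((Xs j ω : ℕ) : ℝ≥0∞) := by
        exact_mod_cast hω
      simpa using this
    simp only [Set.mem_setOf_eq, hM ω]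
    exact h1.trans (le_iSup (fun i => (Xs i ω : ℝ≥0∞) - (i : ℝ≥0∞)) j)
  -- key finite bound
  have key : ∀ m : ℕ, (1 / 2) * ∑ j ∈ Finset.range m, α (n + j) ≤
      P {ω | (n : ℝ≥0∞) ≤ M ω} := by
    intro m
    -- the product bound, transferred from ℝ
    have hS1 : ∑ j ∈ Finset.range m, α (n + j) ≤ 1 := by
      refine (hα_le m).trans ?_
      norm_num
    have hprod_le : ∏ j ∈ Finset.range m, P ((A j)ᶜ) ≤
        1 - (1 / 2) * ∑ j ∈ Finset.range m, α (n + j) := by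
      -- real versions
      set p : ℕ → ℝ := fun j => (α (n + j)).toReal with hp
      have hfin : ∀ j, α (n + j) ≠ ∞ := by
        intro j
        exact ne_top_of_le_ne_top (by norm_num) ((ENNReal.le_tsum j).trans hsum)
      have hp0 : ∀ j, 0 ≤ p j := fun j => ENNReal.toReal_nonneg
      have hple1 : ∀ j, α (n + j) ≤ 1 := by
        intro j; rw [hα]; exact prob_le_one
      have hp1 : ∀ j, p j ≤ 1 := by
        intro j
        rw [hp]
        exact ENNReal.toReal_le_of_le_ofReal zero_le_one (by simpa using hple1 j)
      have hsumReal : (∑ j ∈ Finset.range m, p j) ≤ 1 := by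
        have : (∑ j ∈ Finset.range m, α (n + j)).toReal ≤ (1 : ℝ≥0∞).toReal := by
          exact ENNReal.toReal_mono (by norm_num) hS1
        rwa [ENNReal.toReal_sum (fun j _ => hfin j), ENNReal.toReal_one] at this
      have hreal := real_prod_one_sub_le p hp0 hp1 m hsumReal
      -- both sides finite; compare via toReal
      have hLfin : ∏ j ∈ Finset.range m, P ((A j)ᶜ) ≠ ∞ :=
        ne_top_of_le_ne_top ENNReal.one_ne_top
          (Finset.prod_le_one (fun j _ => zero_le) (fun j _ => prob_le_one))
      rw [← ENNReal.toReal_le_toReal hLfin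
          (ne_top_of_le_ne_top ENNReal.one_ne_top tsub_le_self)]
      have hcompl : ∀ j, P ((A j)ᶜ) = 1 - α (n + j) := by
        intro j
        rw [measure_compl (hAmeas j) (measure_ne_top P _), measure_univ, hPA]
      have hL : (∏ j ∈ Finset.range m, P ((A j)ᶜ)).toReal =
          ∏ j ∈ Finset.range m, (1 - p j) := by
        rw [ENNReal.toReal_prod]
        refine Finset.prod_congr rfl fun j _ => ?_
        rw [hcompl j, ENNReal.toReal_sub_of_le (hple1 j) ENNReal.one_ne_top,
          ENNReal.toReal_one]
      have hhalf : ((1 : ℝ≥0∞) / 2) * ∑ j ∈ Finset.range m, α (n + j) ≤ 1 := by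
        calc (1 / 2 : ℝ≥0∞) * ∑ j ∈ Finset.range m, α (n + j)
            ≤ 1 * 1 := mul_le_mul (by norm_num) hS1 zero_le zero_le_one
          _ = 1 := one_mul 1
      have hR : ((1 : ℝ≥0∞) - (1 / 2) * ∑ j ∈ Finset.range m, α (n + j)).toReal =
          1 - (∑ j ∈ Finset.range m, p j) / 2 := by
        rw [ENNReal.toReal_sub_of_le hhalf ENNReal.one_ne_top, ENNReal.toReal_one,
          ENNReal.toReal_mul, ENNReal.toReal_sum (fun j _ => hfin j)]
        have : ((1 : ℝ≥0∞) / 2).toReal = (1 : ℝ) / 2 := by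
          simp
        rw [this]
        ring
      rw [hL, hR]
      exact hreal
    -- from the complement bound to the union bound
    have hUnion : P (⋃ j ∈ Finset.range m, A j) =
        1 - P (⋂ j ∈ Finset.range m, (A j)ᶜ) := by
      rw [← Set.compl_iUnion₂]
      rw [measure_compl (by
        exact (MeasurableSet.biUnion (Finset.range m).countable_toSet
          (fun j _ => hAmeas j))) (measure_ne_top P _), measure_univ]
      rw [ENNReal.sub_sub_cancel ENNReal.one_ne_top prob_le_one]
    have hstep : (1 / 2) * ∑ j ∈ Finset.range m, α (n + j) ≤
        P (⋃ j ∈ Finset.range m, A j) := by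
      rw [hUnion, hprodeq m]
      calc (1 / 2) * ∑ j ∈ Finset.range m, α (n + j)
          = 1 - (1 - (1 / 2) * ∑ j ∈ Finset.range m, α (n + j)) := by
            rw [ENNReal.sub_sub_cancel ENNReal.one_ne_top]
            calc (1 / 2 : ℝ≥0∞) * ∑ j ∈ Finset.range m, α (n + j)
                ≤ 1 * 1 := mul_le_mul (by norm_num) hS1 zero_le zero_le_one
              _ = 1 := one_mul 1
        _ ≤ 1 - ∏ j ∈ Finset.range m, P ((A j)ᶜ) :=
            tsub_le_tsub_left hprod_le 1
    refine hstep.trans (measure_mono ?_)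
    exact Set.iUnion₂_subset fun j _ => hsub j
  -- pass to the limit
  rw [ge_iff_le, ENNReal.tsum_eq_iSup_nat, ENNReal.mul_iSup]
  exact iSup_le key
end
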